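/- Let X(t) solve Ẋ = A - XAX on O(n) with A symmetric, given by the explicit formula X(t) = (sinh(At) + cosh(At)X₀)(cosh(At) + sinh(At)X₀)⁻¹. If V₋(0) is contained in the (-1)-eigenspace of X₀, then exp(-At)·V₋(0) is contained in the (-1)-eigenspace of X(t); that is, X(t)·exp(-At)v = -exp(-At)v for every v with X₀v = -v. -/

import Mathlib

open Matrix

/-- Matrix hyperbolic sine, `sinh M = (exp M - exp (-M))/2`. -/
noncomputable def matrixSinh {n : ℕ} (M : Matrix (Fin n) (Fin n) ℝ) :
    Matrix (Fin n) (Fin n) ℝ :=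
  (1 / 2 : ℝ) • (NormedSpace.exp M - NormedSpace.exp (-M))

/-- Matrix hyperbolic cosine, `cosh M = (exp M + exp (-M))/2`. -/
noncomputable def matrixCosh {n : ℕ} (M : Matrix (Fin n) (Fin n) ℝ) :
    Matrix (Fin n) (Fin n) ℝ :=
  (1 / 2 : ℝ) • (NormedSpace.exp M + NormedSpace.exp (-M))

open NormedSpace

/-- `cosh(tA) + sinh(tA) X₀` is invertible when `A` is symmetric and `X₀` is orthogonal. -/
theorem Qinv (n : ℕ) (A X₀ : Matrix (Fin n) (Fin n) ℝ) (hA : Aᵀ = A) (hX₀ : X₀ᵀ * X₀ = 1)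
    (t : ℝ) :
    IsUnit ((1 / 2 : ℝ) • (exp (t • A) + exp (-(t • A)))
      + ((1 / 2 : ℝ) • (exp (t • A) - exp (-(t • A)))) * X₀) := by
  set E := exp (t • A) with hE
  set E' := exp (-(t • A)) with hE'
  have hEE' : E * E' = 1 := by
    rw [hE, hE', ← Matrix.exp_add_of_commute _ _ (Commute.refl (t • A)).neg_right,
      add_neg_cancel, exp_zero]
  have hE'E : E' * E = 1 := by
    rw [hE, hE', ← Matrix.exp_add_of_commute _ _ (Commute.refl (t • A)).neg_left,
      neg_add_cancel, exp_zero]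
  have hE'T : E'ᵀ = E' := by
    rw [hE', ← Matrix.exp_transpose, transpose_neg, transpose_smul, hA]
  set Q := (1 / 2 : ℝ) • (E + E') + ((1 / 2 : ℝ) • (E - E')) * X₀ with hQ
  rw [Matrix.isUnit_iff_isUnit_det, isUnit_iff_ne_zero]
  intro hdet
  obtain ⟨x, hx0, hx⟩ := (Matrix.exists_mulVec_eq_zero_iff).2 hdet
  set u := x + X₀ *ᵥ x with hu
  set w := x - X₀ *ᵥ x with hw
  have key : E *ᵥ u + E' *ᵥ w = 0 := by
    have h2 : E *ᵥ u + E' *ᵥ w = (2:ℝ) • (Q *ᵥ x) := by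
      rw [hQ, hu, hw]
      simp only [Matrix.add_mulVec, Matrix.smul_mulVec, Matrix.sub_mulVec,
        Matrix.mulVec_add, Matrix.mulVec_sub, ← Matrix.mulVec_mulVec]
      module
    rw [h2, hx, smul_zero]
  have key2 : u + (E' * E') *ᵥ w = 0 := by
    have := congrArg (fun y => E' *ᵥ y) key
    simp only [Matrix.mulVec_add, Matrix.mulVec_mulVec, hE'E, Matrix.one_mulVec,
      Matrix.mulVec_zero] at this
    exact this
  have horth : w ⬝ᵥ u = 0 := by
    rw [hu, hw]
    have h1 : (X₀ *ᵥ x) ⬝ᵥ (X₀ *ᵥ x) = x ⬝ᵥ x := by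
      rw [Matrix.dotProduct_mulVec, ← Matrix.mulVec_transpose, Matrix.mulVec_mulVec, hX₀,
        Matrix.one_mulVec]
    simp only [dotProduct_add, sub_dotProduct]
    rw [h1, dotProduct_comm (X₀ *ᵥ x) x]
    ring
  have hwB : w ⬝ᵥ ((E' * E') *ᵥ w) = (E' *ᵥ w) ⬝ᵥ (E' *ᵥ w) := by
    rw [← Matrix.mulVec_mulVec, Matrix.dotProduct_mulVec w E']
    rw [show w ᵥ* E' = E' *ᵥ w by rw [← Matrix.mulVec_transpose, hE'T]]
  have hEw : E' *ᵥ w = 0 := by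
    have h0 : w ⬝ᵥ (u + (E' * E') *ᵥ w) = 0 := by rw [key2, dotProduct_zero]
    rw [dotProduct_add, horth, zero_add, hwB] at h0
    exact (dotProduct_self_eq_zero).1 h0
  have hw0 : w = 0 := by
    have := congrArg (fun y => E *ᵥ y) hEw
    simpa [Matrix.mulVec_mulVec, hEE'] using this
  have hu0 : u = 0 := by
    have := key2
    rw [hw0, Matrix.mulVec_zero, add_zero] at this
    exact this
  apply hx0
  have : (2:ℝ) • x = u + w := by rw [hu, hw]; module
  rw [hu0, hw0, add_zero] at this
  have := congrArg (fun y => (1/2:ℝ) • y) this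
  simpa using this

/-- The gradient flow `X(t) = (sinh(At) + cosh(At)X₀)(cosh(At) + sinh(At)X₀)⁻¹` moves the
`(-1)`-eigenspace by `exp(-At)`: if `X₀ v = -v` then `X(t)(exp(-At) v) = -exp(-At) v`. -/
theorem gradient_flow_moves_minus_one_eigenspace (n : ℕ)
    (A X₀ : Matrix (Fin n) (Fin n) ℝ) (hA : Aᵀ = A) (hX₀ : X₀ᵀ * X₀ = 1)
    (v : Fin n → ℝ) (hv : X₀ *ᵥ v = -v) :
    ∀ t : ℝ,
      ((matrixSinh (t • A) + matrixCosh (t • A) * X₀) *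
          (matrixCosh (t • A) + matrixSinh (t • A) * X₀)⁻¹) *ᵥ
        (NormedSpace.exp (-(t • A)) *ᵥ v) =
      -(NormedSpace.exp (-(t • A)) *ᵥ v) := by
  intro t
  set E := exp (t • A) with hE
  set E' := exp (-(t • A)) with hE'
  set S := matrixSinh (t • A) with hS
  set C := matrixCosh (t • A) with hC
  have hQunit : IsUnit (C + S * X₀) := by
    rw [hC, hS, matrixCosh, matrixSinh]
    exact Qinv n A X₀ hA hX₀ t
  have hQdet : IsUnit (C + S * X₀).det := (Matrix.isUnit_iff_isUnit_det _).1 hQunit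
  have hQv : (C + S * X₀) *ᵥ v = E' *ᵥ v := by
    rw [hC, hS, matrixCosh, matrixSinh, Matrix.add_mulVec, ← Matrix.mulVec_mulVec,
      Matrix.smul_mulVec, Matrix.smul_mulVec, hv]
    simp only [Matrix.add_mulVec, Matrix.sub_mulVec, Matrix.mulVec_neg, ← hE, ← hE']
    module
  have hinv : (C + S * X₀)⁻¹ *ᵥ (E' *ᵥ v) = v := by
    rw [← hQv, Matrix.mulVec_mulVec, Matrix.nonsing_inv_mul _ hQdet, Matrix.one_mulVec]
  rw [← Matrix.mulVec_mulVec, hinv]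
  rw [hS, hC, matrixCosh, matrixSinh, Matrix.add_mulVec, ← Matrix.mulVec_mulVec,
    Matrix.smul_mulVec, Matrix.smul_mulVec, hv]
  simp only [Matrix.add_mulVec, Matrix.sub_mulVec, Matrix.mulVec_neg, ← hE, ← hE']
  module
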